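/- arXiv:0810.2149 — 3 statements merged into one kernel-verified Lean document; each statement's English description precedes it below -/
import Mathlib

section
/- Let α, β, γ : [0,∞) → ℝ be continuous functions with α(t) = β(t) + γ(t) for all t, where α is nonnegative, β is strictly positive, γ is of finite variation on compacts with γ(0) = 0, and γ is flat off the zero set of α in the sense that ∫₀^∞ 1_{α(t)>0} dγ(t) = 0. Then γ(t) = 0 and α(t) = β(t) for all t ≥ 0. -/
/-- Skorokhod-type lemma: if a nonnegative continuous function `α = β + γ` on `[0,∞)` has a
strictly positive continuous part `β` and a finite-variation part `γ` with `γ(0) = 0` which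
is flat off the zero set of `α`, then `γ ≡ 0` and `α ≡ β` on `[0,∞)`. -/
theorem stmt_0 (α β γ : ℝ → ℝ)
    (hα_cont : ContinuousOn α (Set.Ici 0))
    (hβ_cont : ContinuousOn β (Set.Ici 0))
    (hγ_cont : ContinuousOn γ (Set.Ici 0))
    (hdecomp : ∀ t, 0 ≤ t → α t = β t + γ t)
    (hα_nonneg : ∀ t, 0 ≤ t → 0 ≤ α t)
    (hβ_pos : ∀ t, 0 ≤ t → 0 < β t)
    (hγ_bv : LocallyBoundedVariationOn γ (Set.Ici 0))
    (hγ0 : γ 0 = 0)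
    (hflat : ∀ a b : ℝ, 0 ≤ a → a ≤ b → (∀ t ∈ Set.Icc a b, 0 < α t) → γ b = γ a) :
    ∀ t, 0 ≤ t → γ t = 0 ∧ α t = β t := by
  intro t ht
  suffices h : γ t = 0 by
    exact ⟨h, by rw [hdecomp t ht, h, add_zero]⟩
  by_contra hne
  set S : Set ℝ := Set.Icc 0 t ∩ γ ⁻¹' {0} with hSdef
  have h0S : (0:ℝ) ∈ S := ⟨⟨le_refl 0, ht⟩, hγ0⟩
  have hbdd : BddAbove S := ⟨t, fun u hu => hu.1.2⟩
  have hclosed : IsClosed S := by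
    apply ContinuousOn.preimage_isClosed_of_isClosed
      (hγ_cont.mono (fun x hx => hx.1)) isClosed_Icc isClosed_singleton
  have hsmem : sSup S ∈ S := hclosed.csSup_mem ⟨0, h0S⟩ hbdd
  set s := sSup S with hs
  have hs0 : (0:ℝ) ≤ s := hsmem.1.1
  have hst' : s ≤ t := hsmem.1.2
  have hγs : γ s = 0 := hsmem.2
  have hst : s < t := lt_of_le_of_ne hst' (fun h => hne (h ▸ hγs))
  have hαs : 0 < α s := by
    rw [hdecomp s hs0, hγs, add_zero]; exact hβ_pos s hs0
  -- α > 0 on a neighborhood of s within [0,∞)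
  have hmem : α ⁻¹' Set.Ioi 0 ∈ nhdsWithin s (Set.Ici 0) :=
    (hα_cont s (Set.mem_Ici.mpr hs0)) (Ioi_mem_nhds hαs)
  rcases mem_nhdsWithin.mp hmem with ⟨U, hUopen, hsU, hUsub⟩
  rcases Metric.isOpen_iff.mp hUopen s hsU with ⟨ε, hεpos, hball⟩
  set u := min (s + ε / 2) t with hu
  have hsu : s < u := lt_min (by linarith) hst
  have huIcc : ∀ v ∈ Set.Icc s u, 0 < α v := by
    intro v hv
    apply hUsub
    constructor
    · apply hball
      rw [Metric.mem_ball, Real.dist_eq, abs_lt]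
      have h1 : v ≤ s + ε / 2 := le_trans hv.2 (min_le_left _ _)
      constructor <;> [linarith [hv.1]; linarith]
    · exact Set.mem_Ici.mpr (le_trans hs0 hv.1)
  have hγu : γ u = γ s := hflat s u hs0 (le_of_lt hsu) huIcc
  have huS : u ∈ S := ⟨⟨le_trans hs0 (le_of_lt hsu), min_le_right _ _⟩, by
    rw [Set.mem_preimage, Set.mem_singleton_iff, hγu, hγs]⟩
  exact absurd (le_csSup hbdd huS) (not_le.mpr hsu)
end

section
/- Suppose A(x) = α I_n + β D D′ + 𝔥𝔥′ diag(γ) for constants α, β ∈ ℝ and γ ∈ ℝⁿ, where 𝔥 is the all-ones vector and D is the n×3 matrix with columns d₁,d₂,d₃ as above. Then for every x with D D′ x ≠ 0, R̃(x) := trace(D′ A D) · (x′ D D′ x) / (x′ D D′ A D D′ x) = 2. -/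
open Matrix

/-- The `n × 3` matrix with columns `d₁ = (1,-1,0,…,0)ᵀ`, `d₂ = (0,1,-1,0,…,0)ᵀ`,
`d₃ = (-1,0,1,0,…,0)ᵀ`. -/
def Dmat (n : ℕ) : Matrix (Fin n) (Fin 3) ℝ :=
  Matrix.of fun i j =>
    if j = 0 then (if (i : ℕ) = 0 then 1 else if (i : ℕ) = 1 then -1 else 0)
    else if j = 1 then (if (i : ℕ) = 1 then 1 else if (i : ℕ) = 2 then -1 else 0)
    else (if (i : ℕ) = 0 then -1 else if (i : ℕ) = 2 then 1 else 0)

lemma sum3 {n : ℕ} (hn : 3 ≤ n) (f : Fin n → ℝ)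
    (h : ∀ i : Fin n, 3 ≤ (i : ℕ) → f i = 0) :
    ∑ i, f i = f ⟨0, by omega⟩ + f ⟨1, by omega⟩ + f ⟨2, by omega⟩ := by
  have hs : ∑ i, f i =
      ∑ i ∈ ({⟨0, by omega⟩, ⟨1, by omega⟩, ⟨2, by omega⟩} : Finset (Fin n)), f i := by
    refine (Finset.sum_subset (Finset.subset_univ _) ?_).symm
    intro i _ hi
    refine h i ?_
    simp [Finset.mem_insert, Fin.ext_iff] at hi
    omega
  rw [hs]
  rw [Finset.sum_insert (by simp [Fin.ext_iff]), Finset.sum_insert (by simp [Fin.ext_iff]),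
    Finset.sum_singleton, add_assoc]

lemma Dmat_zero {n : ℕ} (i : Fin n) (hi : 3 ≤ (i : ℕ)) (j : Fin 3) :
    Dmat n i j = 0 := by
  simp only [Dmat, Matrix.of_apply]
  split_ifs <;> first | rfl | omega

/-- column sums of D are zero -/
lemma DtJ {n : ℕ} (hn : 3 ≤ n) :
    (Dmat n)ᵀ * (Matrix.of fun _ _ => (1 : ℝ) : Matrix (Fin n) (Fin n) ℝ) = 0 := by
  ext j i
  simp only [Matrix.mul_apply, Matrix.transpose_apply, Matrix.of_apply, mul_one,
    Matrix.zero_apply]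
  rw [sum3 hn _ (fun k hk => Dmat_zero k hk j)]
  fin_cases j <;> simp [Dmat] <;> norm_num

/-- `DᵀD = 3I - J₃` -/
lemma DtD {n : ℕ} (hn : 3 ≤ n) :
    (Dmat n)ᵀ * Dmat n =
      (3 : ℝ) • (1 : Matrix (Fin 3) (Fin 3) ℝ) - Matrix.of fun _ _ => (1 : ℝ) := by
  ext j k
  simp only [Matrix.mul_apply, Matrix.transpose_apply]
  rw [sum3 hn _ (fun i hi => by rw [Dmat_zero i hi j, zero_mul])]
  fin_cases j <;> fin_cases k <;>
    simp [Dmat, Matrix.one_apply] <;> norm_num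

/-- row sums of D are zero: `J₃ Dᵀ = 0` -/
lemma JDt (n : ℕ) :
    (Matrix.of fun _ _ => (1 : ℝ) : Matrix (Fin 3) (Fin 3) ℝ) * (Dmat n)ᵀ = 0 := by
  ext j i
  simp only [Matrix.mul_apply, Matrix.transpose_apply, Matrix.of_apply, one_mul,
    Matrix.zero_apply, Fin.sum_univ_three]
  simp only [Dmat, Matrix.of_apply]
  norm_num
  split_ifs <;> norm_num <;> omega

lemma DtDDt {n : ℕ} (hn : 3 ≤ n) :
    (Dmat n)ᵀ * Dmat n * (Dmat n)ᵀ = (3 : ℝ) • (Dmat n)ᵀ := by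
  rw [DtD hn, Matrix.sub_mul, Matrix.smul_mul, Matrix.one_mul, JDt, sub_zero]

lemma MM {n : ℕ} (hn : 3 ≤ n) :
    (Dmat n * (Dmat n)ᵀ) * (Dmat n * (Dmat n)ᵀ) = (3 : ℝ) • (Dmat n * (Dmat n)ᵀ) := by
  calc Dmat n * (Dmat n)ᵀ * (Dmat n * (Dmat n)ᵀ)
      = Dmat n * ((Dmat n)ᵀ * Dmat n * (Dmat n)ᵀ) := by
        simp only [Matrix.mul_assoc]
    _ = (3 : ℝ) • (Dmat n * (Dmat n)ᵀ) := by
        rw [DtDDt hn, Matrix.mul_smul]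

lemma trace_DtD {n : ℕ} (hn : 3 ≤ n) : ((Dmat n)ᵀ * Dmat n).trace = 6 := by
  rw [DtD hn]
  simp [Matrix.trace, Matrix.diag]
  norm_num

/-- If `A = α Iₙ + β D D′ + 𝔥𝔥′ diag(γ)` (with `𝔥` the all-ones vector), then for every `x`
with `D D′ x ≠ 0` (and nonzero denominator), `R̃(x) = 2`. -/
theorem stmt_7 (n : ℕ) (hn : 3 ≤ n) (α β : ℝ) (γ : Fin n → ℝ)
    (A : Matrix (Fin n) (Fin n) ℝ)
    (hAdef : A = α • (1 : Matrix (Fin n) (Fin n) ℝ) + β • (Dmat n * (Dmat n)ᵀ) +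
      (Matrix.of fun _ _ => (1 : ℝ)) * Matrix.diagonal γ)
    (x : Fin n → ℝ) (hx : (Dmat n * (Dmat n)ᵀ).mulVec x ≠ 0)
    (hden : x ⬝ᵥ (Dmat n * (Dmat n)ᵀ * A * (Dmat n * (Dmat n)ᵀ)).mulVec x ≠ 0) :
    ((Dmat n)ᵀ * A * Dmat n).trace * (x ⬝ᵥ (Dmat n * (Dmat n)ᵀ).mulVec x) /
        (x ⬝ᵥ (Dmat n * (Dmat n)ᵀ * A * (Dmat n * (Dmat n)ᵀ)).mulVec x) = 2 := by
  have hDtJ := DtJ (n := n) hn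
  -- the sandwiched matrix
  have hkey : Dmat n * (Dmat n)ᵀ * A * (Dmat n * (Dmat n)ᵀ) =
      (3 * α + 9 * β) • (Dmat n * (Dmat n)ᵀ) := by
    subst hAdef
    have h1 : Dmat n * (Dmat n)ᵀ * ((Matrix.of fun _ _ => (1 : ℝ)) * Matrix.diagonal γ) = 0 := by
      calc Dmat n * (Dmat n)ᵀ * ((Matrix.of fun _ _ => (1 : ℝ)) * Matrix.diagonal γ)
          = Dmat n * ((Dmat n)ᵀ * (Matrix.of fun _ _ => (1 : ℝ) : Matrix (Fin n) (Fin n) ℝ)) * Matrix.diagonal γ := by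
            simp only [Matrix.mul_assoc]
        _ = 0 := by rw [hDtJ]; simp
    rw [Matrix.mul_add, Matrix.mul_add, h1, add_zero, Matrix.mul_smul, Matrix.mul_one,
      Matrix.mul_smul, Matrix.add_mul, Matrix.smul_mul, Matrix.smul_mul, MM hn,
      Matrix.smul_mul, MM hn, smul_smul, smul_smul, smul_smul, ← add_smul]
    congr 1
    ring
  have htr : ((Dmat n)ᵀ * A * Dmat n).trace = 6 * α + 18 * β := by
    subst hAdef
    have h1 : (Dmat n)ᵀ * ((Matrix.of fun _ _ => (1 : ℝ)) * Matrix.diagonal γ) * Dmat n = 0 := by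
      rw [← Matrix.mul_assoc, hDtJ]; simp
    rw [Matrix.mul_add, Matrix.mul_add, Matrix.add_mul, Matrix.add_mul, h1, add_zero]
    rw [Matrix.mul_smul, Matrix.mul_one, Matrix.smul_mul, Matrix.mul_smul, Matrix.smul_mul]
    have h2 : (Dmat n)ᵀ * (Dmat n * (Dmat n)ᵀ) * Dmat n =
        (3 : ℝ) • ((Dmat n)ᵀ * Dmat n) := by
      calc (Dmat n)ᵀ * (Dmat n * (Dmat n)ᵀ) * Dmat n
          = ((Dmat n)ᵀ * Dmat n * (Dmat n)ᵀ) * Dmat n := by simp only [Matrix.mul_assoc]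
        _ = (3 : ℝ) • ((Dmat n)ᵀ * Dmat n) := by rw [DtDDt hn, Matrix.smul_mul]
    rw [h2, Matrix.trace_add, Matrix.trace_smul, Matrix.trace_smul, Matrix.trace_smul,
      trace_DtD hn]
    simp [smul_eq_mul]; ring
  rw [htr, hkey]
  rw [hkey] at hden
  have hd : x ⬝ᵥ ((3 * α + 9 * β) • (Dmat n * (Dmat n)ᵀ)).mulVec x =
      (3 * α + 9 * β) * (x ⬝ᵥ (Dmat n * (Dmat n)ᵀ).mulVec x) := by
    rw [Matrix.smul_mulVec, dotProduct_smul, smul_eq_mul]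
  rw [hd] at hden ⊢
  have : (6 * α + 18 * β) * (x ⬝ᵥ (Dmat n * (Dmat n)ᵀ).mulVec x) =
      2 * ((3 * α + 9 * β) * (x ⬝ᵥ (Dmat n * (Dmat n)ᵀ).mulVec x)) := by ring
  rw [this, mul_div_assoc, div_self hden, mul_one]
end

section
/- Let 𝔄 be the (n−1)×(n−1) symmetric tridiagonal matrix with diagonal entries 𝔄_{kk} = σ̃_k² + σ̃_{k+1}² and off-diagonal entries 𝔄_{k,k+1} = 𝔄_{k+1,k} = −σ̃_{k+1}², where σ̃₁,…,σ̃_n > 0. Let 𝔇 = diag(𝔄) and let 𝔔 be the (n−1)×(n−1) matrix with entries 1/2 on the first super- and sub-diagonal and 0 elsewhere. Then the skew-symmetry identity 2𝔇 − 𝔔𝔇 − 𝔇𝔔 − 2𝔄 = 0 holds if and only if the variances grow linearly: σ̃₂² − σ̃₁² = σ̃₃² − σ̃₂² = ⋯ = σ̃_n² − σ̃_{n−1}². -/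
open Matrix

/-- The `(n−1)×(n−1)` symmetric tridiagonal covariance matrix `𝔄` with diagonal entries
`σ̃ₖ² + σ̃ₖ₊₁²` and off-diagonal entries `−σ̃ₖ₊₁²` (here `m = n−1`). -/
def Amat (m : ℕ) (σ : Fin (m + 1) → ℝ) : Matrix (Fin m) (Fin m) ℝ :=
  Matrix.of fun k l =>
    if k = l then σ k.castSucc ^ 2 + σ k.succ ^ 2
    else if (l : ℕ) = (k : ℕ) + 1 then -(σ k.succ ^ 2)
    else if (k : ℕ) = (l : ℕ) + 1 then -(σ k.castSucc ^ 2)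
    else 0

/-- The matrix `𝔔` with entries `1/2` on the first super- and sub-diagonals. -/
noncomputable def Qmat (m : ℕ) : Matrix (Fin m) (Fin m) ℝ :=
  Matrix.of fun k l =>
    if (l : ℕ) = (k : ℕ) + 1 ∨ (k : ℕ) = (l : ℕ) + 1 then (1 / 2 : ℝ) else 0

lemma Amat_diag (m : ℕ) (σ : Fin (m + 1) → ℝ) (k : Fin m) :
    Amat m σ k k = σ k.castSucc ^ 2 + σ k.succ ^ 2 := by simp [Amat]

lemma entry_eq (m : ℕ) (σ : Fin (m + 1) → ℝ) (k l : Fin m) :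
    (2 • Matrix.diagonal (fun k : Fin m => Amat m σ k k) -
          Qmat m * Matrix.diagonal (fun k : Fin m => Amat m σ k k) -
          Matrix.diagonal (fun k : Fin m => Amat m σ k k) * Qmat m -
          2 • Amat m σ) k l =
      2 * (if k = l then Amat m σ k k else 0) -
        Qmat m k l * Amat m σ l l - Amat m σ k k * Qmat m k l - 2 * Amat m σ k l := by
  rw [Matrix.sub_apply, Matrix.sub_apply, Matrix.sub_apply, Matrix.smul_apply,
    Matrix.smul_apply, Matrix.mul_diagonal, Matrix.diagonal_mul, Matrix.diagonal_apply]
  norm_num [nsmul_eq_mul]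

/-- The skew-symmetry identity `2𝔇 − 𝔔𝔇 − 𝔇𝔔 − 2𝔄 = 0` holds iff the variances grow
linearly: `σ̃₂² − σ̃₁² = σ̃₃² − σ̃₂² = ⋯ = σ̃ₙ² − σ̃ₙ₋₁²`. -/
theorem stmt_12 (m : ℕ) (hm : 2 ≤ m) (σ : Fin (m + 1) → ℝ) (hσ : ∀ i, 0 < σ i) :
    (2 • Matrix.diagonal (fun k : Fin m => Amat m σ k k) -
          Qmat m * Matrix.diagonal (fun k : Fin m => Amat m σ k k) -
          Matrix.diagonal (fun k : Fin m => Amat m σ k k) * Qmat m -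
          2 • Amat m σ = 0) ↔
      (∀ k l : Fin m, σ k.succ ^ 2 - σ k.castSucc ^ 2 = σ l.succ ^ 2 - σ l.castSucc ^ 2) := by
  have hm0 : 0 < m := by omega
  have sup : ∀ k l : Fin m, (l : ℕ) = (k : ℕ) + 1 →
      (2 • Matrix.diagonal (fun k : Fin m => Amat m σ k k) -
          Qmat m * Matrix.diagonal (fun k : Fin m => Amat m σ k k) -
          Matrix.diagonal (fun k : Fin m => Amat m σ k k) * Qmat m -
          2 • Amat m σ) k l =
        -(1/2) * ((σ l.succ ^ 2 - σ l.castSucc ^ 2) - (σ k.succ ^ 2 - σ k.castSucc ^ 2)) := by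
    intro k l hkl
    have hkne : k ≠ l := by intro e; rw [e] at hkl; omega
    have hc : l.castSucc = k.succ := Fin.ext (by simp [hkl])
    have hQ : Qmat m k l = 1 / 2 := by simp [Qmat, hkl]
    have hA : Amat m σ k l = -(σ k.succ ^ 2) := by simp [Amat, hkne, hkl]
    rw [entry_eq, if_neg hkne, hQ, hA, Amat_diag, Amat_diag, hc]
    ring
  have sub : ∀ k l : Fin m, (k : ℕ) = (l : ℕ) + 1 →
      (2 • Matrix.diagonal (fun k : Fin m => Amat m σ k k) -
          Qmat m * Matrix.diagonal (fun k : Fin m => Amat m σ k k) -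
          Matrix.diagonal (fun k : Fin m => Amat m σ k k) * Qmat m -
          2 • Amat m σ) k l =
        -(1/2) * ((σ k.succ ^ 2 - σ k.castSucc ^ 2) - (σ l.succ ^ 2 - σ l.castSucc ^ 2)) := by
    intro k l hkl
    have hkne : k ≠ l := by intro e; rw [e] at hkl; omega
    have h1 : ¬ (l : ℕ) = (k : ℕ) + 1 := by omega
    have hc : k.castSucc = l.succ := Fin.ext (by simp [hkl])
    have hQ : Qmat m k l = 1 / 2 := by simp [Qmat, hkl]
    have hA : Amat m σ k l = -(σ k.castSucc ^ 2) := by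
      simp only [Amat, Matrix.of_apply]; rw [if_neg hkne, if_neg h1, if_pos hkl]
    rw [entry_eq, if_neg hkne, hQ, hA, Amat_diag, Amat_diag, hc]
    ring
  constructor
  · intro h
    have adj : ∀ k l : Fin m, (l : ℕ) = (k : ℕ) + 1 →
        σ k.succ ^ 2 - σ k.castSucc ^ 2 = σ l.succ ^ 2 - σ l.castSucc ^ 2 := by
      intro k l hkl
      have := (sup k l hkl).symm.trans (congrFun (congrFun h k) l)
      simp only [Matrix.zero_apply] at this
      linarith
    intro k l
    have key : ∀ i : ℕ, ∀ hi : i < m,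
        σ (Fin.succ ⟨i, hi⟩) ^ 2 - σ (Fin.castSucc ⟨i, hi⟩) ^ 2 =
        σ (Fin.succ (⟨0, hm0⟩ : Fin m)) ^ 2 - σ (Fin.castSucc (⟨0, hm0⟩ : Fin m)) ^ 2 := by
      intro i
      induction i with
      | zero => intro hi; rfl
      | succ j ih =>
        intro hi
        have hj : j < m := by omega
        have := adj ⟨j, hj⟩ ⟨j + 1, hi⟩ rfl
        rw [← this]; exact ih hj
    have hk := key k k.isLt
    have hl := key l l.isLt
    simp only [Fin.eta] at hk hl
    rw [hk, hl]
  · intro h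
    ext k l
    by_cases hkl : k = l
    · subst hkl
      rw [entry_eq, if_pos rfl]
      have : Qmat m k k = 0 := by simp [Qmat]
      rw [this]; simp [Matrix.zero_apply]
    · by_cases h1 : (l : ℕ) = (k : ℕ) + 1
      · rw [sup k l h1, h k l]; simp
      · by_cases h2 : (k : ℕ) = (l : ℕ) + 1
        · rw [sub k l h2, h k l]; simp
        · rw [entry_eq, if_neg hkl]
          have hQ : Qmat m k l = 0 := by simp [Qmat, h1, h2]
          have hA : Amat m σ k l = 0 := by simp [Amat, hkl, h1, h2]
          rw [hQ, hA]; simp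
end
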